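/- Equivariant partition formula: let (S, ⊕, σ, ε) be a locally finite SFD partial semigroup, R a commutative ℚ-algebra, and c : S → R a multiplicative equivariant statistics with c(ε) = 1. Then for every n ≥ 1, c(S_{[1..n]}) = ∑_{π ∈ Πₙ} ∏_{p ∈ π} c(atoms(S)_{[1..card p]}), where Πₙ is the (finite) set of all set partitions of [1..n] = {1, …, n} into nonempty blocks. -/

import Mathlib

/-- A square-free decomposable (SFD) partial semigroup. -/
structure SFD (S : Type*) where
  eps : S
  op : S → S → S
  supp : S → Finset ℕ+
  supp_eq_empty : ∀ ω : S, supp ω = ∅ ↔ ω = eps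
  eps_op : ∀ ω : S, op eps ω = ω
  op_eps : ∀ ω : S, op ω eps = ω
  supp_op : ∀ ω₁ ω₂ : S, supp ω₁ ∩ supp ω₂ = ∅ →
      supp (op ω₁ ω₂) = supp ω₁ ∪ supp ω₂
  op_comm : ∀ ω₁ ω₂ : S, supp ω₁ ∩ supp ω₂ = ∅ → op ω₁ ω₂ = op ω₂ ω₁
  op_assoc : ∀ ω₁ ω₂ ω₃ : S, supp ω₁ ∩ supp ω₂ = ∅ →
      supp ω₁ ∩ supp ω₃ = ∅ → supp ω₂ ∩ supp ω₃ = ∅ →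
      op (op ω₁ ω₂) ω₃ = op ω₁ (op ω₂ ω₃)
  levi : ∀ a b c d : S, supp a ∩ supp b = ∅ → supp c ∩ supp d = ∅ →
      op a b = op c d →
      ∃ w11 w12 w21 w22 : S,
        supp w11 ∩ supp w12 = ∅ ∧ supp w21 ∩ supp w22 = ∅ ∧
        supp w11 ∩ supp w21 = ∅ ∧ supp w12 ∩ supp w22 = ∅ ∧
        a = op w11 w12 ∧ b = op w21 w22 ∧ c = op w11 w21 ∧ d = op w12 w22

/-- Iterated sum of a list of elements. -/
def SFD.opList {S : Type*} (P : SFD S) : List S → S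
  | [] => P.eps
  | a :: l => P.op a (P.opList l)

/-- Iterated sum of a finite family indexed by `Fin n`. -/
def SFD.opFam {S : Type*} (P : SFD S) {n : ℕ} (ω : Fin n → S) : S :=
  P.opList (List.ofFn ω)

/-- An atom: a nonunit element which cannot be split. -/
def SFD.IsAtom {S : Type*} (P : SFD S) (ω : S) : Prop :=
  ω ≠ P.eps ∧ ∀ ω₁ ω₂ : S, P.supp ω₁ ∩ P.supp ω₂ = ∅ → ω = P.op ω₁ ω₂ →
    ω₁ = P.eps ∨ ω₂ = P.eps

/-- The interval `[1..n]` as a finite set of positive integers. -/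
def pInterval (n : ℕ) : Finset ℕ+ :=
  (Finset.range n).image (fun i => ⟨i + 1, Nat.succ_pos i⟩)

open scoped Classical in
/-- The (finite) set of set partitions of `[1..n]` into nonempty blocks. -/
noncomputable def partitionsOf (n : ℕ) : Finset (Finset (Finset ℕ+)) :=
  ((pInterval n).powerset.powerset).filter
    (fun π => ∅ ∉ π ∧ (∀ p ∈ π, ∀ q ∈ π, p ≠ q → p ∩ q = ∅) ∧
      π.sup id = pInterval n)

namespace SFDProof
open Finset
variable {S : Type*} (P : SFD S)

lemma supp_eps : P.supp P.eps = ∅ := (P.supp_eq_empty _).mpr rfl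

/-- Pairwise disjoint supports in a list. -/
def LDisj (l : List S) : Prop := l.Pairwise (fun a b => P.supp a ∩ P.supp b = ∅)

lemma disj_symm {a b : S} (h : P.supp a ∩ P.supp b = ∅) : P.supp b ∩ P.supp a = ∅ := by
  rw [Finset.inter_comm]; exact h

variable {P}

lemma mem_foldr_union (l : List S) (x : ℕ+) :
    x ∈ (l.map P.supp).foldr (· ∪ ·) ∅ ↔ ∃ a ∈ l, x ∈ P.supp a := by
  induction l with
  | nil => simp
  | cons a t ih => simp [ih]

lemma supp_opList {l : List S} (h : LDisj P l) :
    P.supp (P.opList l) = (l.map P.supp).foldr (· ∪ ·) ∅ := by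
  induction l with
  | nil => simp [SFD.opList, supp_eps]
  | cons a t ih =>
    obtain ⟨ha, ht⟩ := List.pairwise_cons.mp h
    have ihe := ih ht
    have hd : P.supp a ∩ P.supp (P.opList t) = ∅ := by
      ext y
      simp only [Finset.mem_inter, Finset.notMem_empty, iff_false, not_and]
      intro hy hy'
      rw [ihe] at hy'
      obtain ⟨b, hb, hyb⟩ := (mem_foldr_union t y).mp hy'
      have h2 := ha b hb
      have hmem : y ∈ P.supp a ∩ P.supp b := Finset.mem_inter.mpr ⟨hy, hyb⟩
      rw [h2] at hmem
      exact absurd hmem (Finset.notMem_empty y)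
    simp [SFD.opList, P.supp_op _ _ hd, ihe]

lemma mem_supp_opList {l : List S} (h : LDisj P l) {x : ℕ+} :
    x ∈ P.supp (P.opList l) ↔ ∃ a ∈ l, x ∈ P.supp a := by
  rw [supp_opList h]; exact mem_foldr_union l x

lemma disj_opList {a : S} {l : List S} (h : LDisj P l)
    (ha : ∀ b ∈ l, P.supp a ∩ P.supp b = ∅) :
    P.supp a ∩ P.supp (P.opList l) = ∅ := by
  ext y
  simp only [Finset.mem_inter, Finset.notMem_empty, iff_false, not_and]
  intro hy hy'
  obtain ⟨b, hb, hyb⟩ := (mem_supp_opList h).mp hy'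
  have h2 := ha b hb
  have hmem : y ∈ P.supp a ∩ P.supp b := Finset.mem_inter.mpr ⟨hy, hyb⟩
  rw [h2] at hmem
  exact absurd hmem (Finset.notMem_empty y)

lemma opList_cons_disj {a : S} {l : List S} (h : LDisj P (a :: l)) :
    P.supp a ∩ P.supp (P.opList l) = ∅ :=
  disj_opList (List.pairwise_cons.mp h).2 (List.pairwise_cons.mp h).1

lemma c_opList {R : Type*} [CommRing R] (c : S → R)
    (hmul : ∀ ω₁ ω₂ : S, P.supp ω₁ ∩ P.supp ω₂ = ∅ → c (P.op ω₁ ω₂) = c ω₁ * c ω₂)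
    (heps : c P.eps = 1) {l : List S} (h : LDisj P l) :
    c (P.opList l) = (l.map c).prod := by
  induction l with
  | nil => simpa [SFD.opList]
  | cons a t ih =>
    simp only [SFD.opList, List.map_cons, List.prod_cons]
    rw [hmul _ _ (opList_cons_disj h), ih (List.pairwise_cons.mp h).2]

/-- opList is invariant under permutations (given disjointness). -/
lemma opList_perm {l l' : List S} (hp : l.Perm l') (h : LDisj P l) :
    P.opList l = P.opList l' := by
  induction hp with
  | nil => rfl
  | cons a hp ih =>
    obtain ⟨ha, ht⟩ := List.pairwise_cons.mp h
    simp only [SFD.opList, ih ht]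
  | swap a b t =>
    -- opList (b :: a :: t) = opList (a :: b :: t)
    obtain ⟨hb, h2⟩ := List.pairwise_cons.mp h
    obtain ⟨ha, ht⟩ := List.pairwise_cons.mp h2
    have hba : P.supp b ∩ P.supp a = ∅ := hb a (List.mem_cons_self)
    have hbt : P.supp b ∩ P.supp (P.opList t) = ∅ :=
      disj_opList ht (fun x hx => hb x (List.mem_cons_of_mem a hx))
    have hat : P.supp a ∩ P.supp (P.opList t) = ∅ := disj_opList ht ha
    show P.op b (P.op a (P.opList t)) = P.op a (P.op b (P.opList t))
    rw [← P.op_assoc _ _ _ hba hbt hat, P.op_comm b a hba,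
      P.op_assoc _ _ _ (disj_symm P hba) hat hbt]
  | trans h1 h2 ih1 ih2 =>
    rename_i l1 l2 l3
    have : LDisj P l2 := (List.Perm.pairwise_iff (fun {a b} hh => disj_symm P hh) h1).mp h
    rw [ih1 h, ih2 this]

/-- `l` is an atomic decomposition of `ω`. -/
def Decomp (P : SFD S) (ω : S) (l : List S) : Prop :=
  LDisj P l ∧ (∀ a ∈ l, P.IsAtom a) ∧ P.opList l = ω

lemma supp_nonempty_of_ne_eps {ω : S} (h : ω ≠ P.eps) : (P.supp ω).Nonempty :=
  Finset.nonempty_iff_ne_empty.mpr (fun he => h ((P.supp_eq_empty ω).mp he))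

lemma opList_append {l₁ l₂ : List S} (h : LDisj P (l₁ ++ l₂)) :
    P.opList (l₁ ++ l₂) = P.op (P.opList l₁) (P.opList l₂) := by
  induction l₁ with
  | nil => simp [SFD.opList, P.eps_op]
  | cons x t iht =>
    obtain ⟨hx, ht⟩ := List.pairwise_cons.mp h
    have hxt : P.supp x ∩ P.supp (P.opList t) = ∅ :=
      disj_opList ((List.pairwise_append.mp ht).1)
        (fun b hb => hx b (List.mem_append_left _ hb))
    have hx2 : P.supp x ∩ P.supp (P.opList l₂) = ∅ :=
      disj_opList ((List.pairwise_append.mp ht).2.1)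
        (fun b hb => hx b (List.mem_append_right _ hb))
    have ht2 : P.supp (P.opList t) ∩ P.supp (P.opList l₂) = ∅ := by
      refine disj_opList ((List.pairwise_append.mp ht).2.1) (fun b hb => disj_symm P ?_)
      exact disj_opList ((List.pairwise_append.mp ht).1)
        (fun e he => disj_symm P ((List.pairwise_append.mp ht).2.2 e he b hb))
    show P.op x (P.opList (t ++ l₂)) = _
    rw [iht ht, ← P.op_assoc _ _ _ hxt hx2 ht2]
    rfl

/-- Existence of atomic decompositions. -/
lemma exists_decomp (ω : S) : ∃ l : List S, Decomp P ω l := by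
  generalize hcard : (P.supp ω).card = N
  induction N using Nat.strong_induction_on generalizing ω with
  | _ N ih =>
  by_cases heps : ω = P.eps
  · exact ⟨[], List.Pairwise.nil, by simp, by simp [SFD.opList, heps]⟩
  by_cases hatom : P.IsAtom ω
  · refine ⟨[ω], List.pairwise_singleton _ _, by simp [hatom], ?_⟩
    simp [SFD.opList, P.op_eps]
  · rw [SFD.IsAtom, not_and] at hatom
    push_neg at hatom
    obtain ⟨ω₁, ω₂, hd, heq, h1, h2⟩ := hatom heps
    have hsupp : P.supp ω = P.supp ω₁ ∪ P.supp ω₂ := heq ▸ P.supp_op _ _ hd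
    have hs1 : (P.supp ω₁).Nonempty := supp_nonempty_of_ne_eps h1
    have hs2 : (P.supp ω₂).Nonempty := supp_nonempty_of_ne_eps h2
    have hcards : (P.supp ω₁).card + (P.supp ω₂).card = N := by
      rw [← hcard, hsupp, Finset.card_union_of_disjoint (Finset.disjoint_iff_inter_eq_empty.mpr hd)]
    have hc1 : (P.supp ω₁).card < N := by
      have := Finset.card_pos.mpr hs2; omega
    have hc2 : (P.supp ω₂).card < N := by
      have := Finset.card_pos.mpr hs1; omega
    obtain ⟨l₁, hl₁d, hl₁a, hl₁e⟩ := ih _ hc1 ω₁ rfl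
    obtain ⟨l₂, hl₂d, hl₂a, hl₂e⟩ := ih _ hc2 ω₂ rfl
    have hLD : LDisj P (l₁ ++ l₂) := by
      rw [LDisj, List.pairwise_append]
      refine ⟨hl₁d, hl₂d, fun a ha b hb => ?_⟩
      have hsa : P.supp a ⊆ P.supp ω₁ := by
        rw [← hl₁e]; exact fun x hx => (mem_supp_opList hl₁d).mpr ⟨a, ha, hx⟩
      have hsb : P.supp b ⊆ P.supp ω₂ := by
        rw [← hl₂e]; exact fun x hx => (mem_supp_opList hl₂d).mpr ⟨b, hb, hx⟩
      exact Finset.subset_empty.mp (hd ▸ Finset.inter_subset_inter hsa hsb)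
    refine ⟨l₁ ++ l₂, hLD, ?_, ?_⟩
    · intro a ha
      rcases List.mem_append.mp ha with h | h
      exacts [hl₁a a h, hl₂a a h]
    · rw [opList_append hLD, hl₁e, hl₂e, heq]

/-- Levi-based extraction: if an atom `a` occurs as a left factor of an atomic
product, it occurs in the list. -/
lemma extract (a : S) (ha : P.IsAtom a) :
    ∀ (l : List S), LDisj P l → (∀ b ∈ l, P.IsAtom b) →
    ∀ x : S, P.supp a ∩ P.supp x = ∅ → P.op a x = P.opList l →
    ∃ l', l.Perm (a :: l') ∧ P.opList l' = x := by
  intro l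
  induction l with
  | nil =>
    intro _ _ x hax heq
    exfalso
    have h0 : P.op a x = P.eps := heq
    have : P.supp (P.op a x) = ∅ := by rw [h0, supp_eps]
    rw [P.supp_op _ _ hax] at this
    obtain ⟨y, hy⟩ := supp_nonempty_of_ne_eps ha.1
    have : y ∈ (∅ : Finset ℕ+) := this ▸ Finset.mem_union_left _ hy
    exact absurd this (Finset.notMem_empty y)
  | cons b t ih =>
    intro hl hla x hax heq
    obtain ⟨hbt, htd⟩ := List.pairwise_cons.mp hl
    have hb : P.IsAtom b := hla b (List.mem_cons_self)
    have hbot : P.supp b ∩ P.supp (P.opList t) = ∅ := opList_cons_disj hl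
    obtain ⟨w11, w12, w21, w22, hw1, hw2, hw3, hw4, ea, ex, eb, et⟩ :=
      P.levi a x b (P.opList t) hax hbot heq
    rcases ha.2 w11 w12 hw1 ea with h11 | h12
    · -- w11 = eps : a = w12
      have haw : a = w12 := by rw [ea, h11, P.eps_op]
      have hbw : b = w21 := by rw [eb, h11, P.eps_op]
      have haw22 : P.supp a ∩ P.supp w22 = ∅ := haw ▸ hw4
      have het' : P.op a w22 = P.opList t := by rw [haw, ← et]
      obtain ⟨t', hperm, hopt'⟩ := ih htd (fun e he => hla e (List.mem_cons_of_mem b he))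
        w22 haw22 het'
      refine ⟨b :: t', ?_, ?_⟩
      · exact (hperm.cons b).trans (List.Perm.swap a b t')
      · show P.op b (P.opList t') = x
        rw [hopt', ex, hbw]
    · -- w12 = eps : a = w11
      have haw : a = w11 := by rw [ea, h12, P.op_eps]
      rcases hb.2 w11 w21 hw3 eb with h11 | h21
      · exact absurd (haw.trans h11) ha.1
      · -- w21 = eps : b = w11 = a
        have hba : b = a := by rw [eb, h21, P.op_eps, ← haw]
        refine ⟨t, by rw [hba], ?_⟩
        have hxw : x = w22 := by rw [ex, h21, P.eps_op]
        have htw : P.opList t = w22 := by rw [et, h12, P.eps_op]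
        rw [htw, hxw]

/-- Uniqueness of atomic decompositions up to permutation. -/
lemma decomp_unique {l₁ : List S} :
    ∀ {ω : S} {l₂ : List S}, Decomp P ω l₁ → Decomp P ω l₂ → l₁.Perm l₂ := by
  induction l₁ with
  | nil =>
    intro ω l₂ h₁ h₂
    have hωe : ω = P.eps := h₁.2.2.symm
    cases l₂ with
    | nil => exact List.Perm.refl _
    | cons b t =>
      exfalso
      have hb : P.IsAtom b := h₂.2.1 b (List.mem_cons_self)
      obtain ⟨y, hy⟩ := supp_nonempty_of_ne_eps hb.1
      have hmem : y ∈ P.supp ω := by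
        rw [← h₂.2.2]
        exact (mem_supp_opList h₂.1).mpr ⟨b, List.mem_cons_self, hy⟩
      rw [hωe, supp_eps] at hmem
      exact absurd hmem (Finset.notMem_empty y)
  | cons a t ih =>
    intro ω l₂ h₁ h₂
    obtain ⟨hl₁, hl₁a, hl₁e⟩ := h₁
    have ha : P.IsAtom a := hl₁a a (List.mem_cons_self)
    have heq : P.op a (P.opList t) = P.opList l₂ := by
      rw [← h₂.2.2] at hl₁e; exact hl₁e
    obtain ⟨l₂', hperm, hop⟩ := extract a ha l₂ h₂.1 h₂.2.1 (P.opList t)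
      (opList_cons_disj hl₁) heq
    have hl₂'d : LDisj P (a :: l₂') :=
      (List.Perm.pairwise_iff (fun {x y} hh => disj_symm P hh) hperm).mp h₂.1
    have hl₂'a : ∀ e ∈ (a :: l₂'), P.IsAtom e := fun e he =>
      h₂.2.1 e (hperm.mem_iff.mpr he)
    have htperm : t.Perm l₂' := by
      refine ih ⟨(List.pairwise_cons.mp hl₁).2, fun e he => hl₁a e (List.mem_cons_of_mem a he),
        rfl⟩ ⟨(List.pairwise_cons.mp hl₂'d).2, fun e he => hl₂'a e (List.mem_cons_of_mem a he), hop⟩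
    exact (htperm.cons a).trans hperm.symm

open scoped Classical

/-- Partitions of a general finite set `F`. -/
noncomputable def PiF (F : Finset ℕ+) : Finset (Finset (Finset ℕ+)) :=
  (F.powerset.powerset).filter
    (fun π => ∅ ∉ π ∧ (∀ p ∈ π, ∀ q ∈ π, p ≠ q → p ∩ q = ∅) ∧ π.sup id = F)

section TheList

variable (P)
variable {π : Finset (Finset ℕ+)} (g : ∀ p ∈ π, S)

/-- The list of chosen atoms of a partition. -/
noncomputable def theList : List S := π.attach.toList.map (fun p => g p.1 p.2)

variable {g}
variable (hdisj : ∀ p ∈ π, ∀ q ∈ π, p ≠ q → p ∩ q = ∅)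
    (hg : ∀ p (hp : p ∈ π), P.IsAtom (g p hp) ∧ P.supp (g p hp) = p)

lemma mem_theList {a : S} : a ∈ theList g ↔ ∃ p, ∃ hp : p ∈ π, g p hp = a := by
  unfold theList
  simp only [List.mem_map]
  constructor
  · rintro ⟨⟨p, hp⟩, _, h⟩; exact ⟨p, hp, h⟩
  · rintro ⟨p, hp, h⟩
    exact ⟨⟨p, hp⟩, by rw [Finset.mem_toList]; exact Finset.mem_attach _ _, h⟩

include hdisj hg

lemma theList_ldisj : LDisj P (theList g) := by
  unfold theList
  refine List.Pairwise.map _ ?_ (Finset.nodup_toList _)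
  rintro ⟨p, hp⟩ ⟨q, hq⟩ hne
  have hpq : p ≠ q := fun h => hne (by simpa using h)
  rw [(hg p hp).2, (hg q hq).2]
  exact hdisj p hp q hq hpq

omit hdisj in
lemma theList_atoms : ∀ a ∈ theList g, P.IsAtom a := by
  intro a ha
  obtain ⟨p, hp, h⟩ := mem_theList.mp ha
  exact h ▸ (hg p hp).1

omit hdisj in
lemma theList_nodup : (theList g).Nodup := by
  unfold theList
  refine List.Pairwise.map _ ?_ (Finset.nodup_toList _)
  rintro ⟨p, hp⟩ ⟨q, hq⟩ hne heq
  have hpq : p ≠ q := fun h => hne (by simpa using h)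
  exact hpq (by rw [← (hg p hp).2, ← (hg q hq).2, heq])

lemma supp_theList (F : Finset ℕ+) (hsup : π.sup id = F) :
    P.supp (P.opList (theList g)) = F := by
  ext x
  rw [mem_supp_opList (theList_ldisj P hdisj hg), ← hsup, Finset.mem_sup]
  constructor
  · rintro ⟨a, ha, hx⟩
    obtain ⟨p, hp, h⟩ := mem_theList.mp ha
    exact ⟨p, hp, by rw [id]; rw [← (hg p hp).2, h]; exact hx⟩
  · rintro ⟨p, hp, hx⟩
    exact ⟨g p hp, mem_theList.mpr ⟨p, hp, rfl⟩, by rw [(hg p hp).2]; exact hx⟩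

lemma c_theList {R : Type*} [CommRing R] (c : S → R)
    (hmul : ∀ ω₁ ω₂ : S, P.supp ω₁ ∩ P.supp ω₂ = ∅ → c (P.op ω₁ ω₂) = c ω₁ * c ω₂)
    (heps : c P.eps = 1) :
    c (P.opList (theList g)) = ∏ p ∈ π.attach, c (g p.1 p.2) := by
  rw [c_opList c hmul heps (theList_ldisj P hdisj hg)]
  unfold theList
  rw [List.map_map, ← Finset.prod_map_toList]
  rfl

end TheList

lemma supp_inj_on_list {l : List S} (hd : LDisj P l) (hatoms : ∀ a ∈ l, P.IsAtom a)
    {a b : S} (ha : a ∈ l) (hb : b ∈ l) (hs : P.supp a = P.supp b) : a = b := by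
  by_contra hne
  have hsym : Symmetric (fun a b : S => P.supp a ∩ P.supp b = ∅) :=
    fun x y h => disj_symm P h
  have h0 : P.supp a ∩ P.supp b = ∅ := (@List.Pairwise.forall _ _ _ ⟨fun x y h => hsym h⟩ hd) ha hb hne
  rw [hs, Finset.inter_self] at h0
  exact (hatoms b hb).1 ((P.supp_eq_empty b).mp h0)

lemma nodup_of_decomp {l : List S} (hd : LDisj P l) (hatoms : ∀ a ∈ l, P.IsAtom a) :
    l.Nodup := by
  refine List.Pairwise.imp_of_mem ?_ hd
  intro a b ha hb hr hab
  subst hab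
  rw [Finset.inter_self] at hr
  exact (hatoms a ha).1 ((P.supp_eq_empty a).mp hr)

lemma master {R : Type*} [CommRing R] (P : SFD S)
    (hlf : ∀ F : Finset ℕ+, {ω : S | P.supp ω = F}.Finite)
    (c : S → R)
    (hmul : ∀ ω₁ ω₂ : S, P.supp ω₁ ∩ P.supp ω₂ = ∅ → c (P.op ω₁ ω₂) = c ω₁ * c ω₂)
    (heps : c P.eps = 1) (F : Finset ℕ+) :
    ∑ ω ∈ (hlf F).toFinset, c ω
      = ∑ π ∈ PiF F, ∏ p ∈ π, ∑ a ∈ (hlf p).toFinset.filter P.IsAtom, c a := by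
  have hrhs : ∀ π ∈ PiF F, (∏ p ∈ π, ∑ a ∈ (hlf p).toFinset.filter P.IsAtom, c a)
      = ∑ g ∈ π.pi (fun p => (hlf p).toFinset.filter P.IsAtom),
          ∏ p ∈ π.attach, c (g p.1 p.2) := fun π _ => Finset.prod_sum _ _ _
  rw [Finset.sum_congr rfl hrhs, Finset.sum_sigma']
  -- unpack memberships
  have hunpack : ∀ (x : Σ π : Finset (Finset ℕ+), ∀ p ∈ π, S),
      x ∈ (PiF F).sigma (fun π => π.pi (fun p => (hlf p).toFinset.filter P.IsAtom)) →
      (x.1 ∈ F.powerset.powerset ∧ ∅ ∉ x.1 ∧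
        (∀ p ∈ x.1, ∀ q ∈ x.1, p ≠ q → p ∩ q = ∅) ∧ x.1.sup id = F) ∧
      (∀ p (hp : p ∈ x.1), P.IsAtom (x.2 p hp) ∧ P.supp (x.2 p hp) = p) := by
    intro x hx
    obtain ⟨h1, h2⟩ := Finset.mem_sigma.mp hx
    obtain ⟨hpow, hprop⟩ := Finset.mem_filter.mp h1
    refine ⟨⟨hpow, hprop⟩, fun p hp => ?_⟩
    have := Finset.mem_pi.mp h2 p hp
    rw [Finset.mem_filter, Set.Finite.mem_toFinset] at this
    exact ⟨this.2, this.1⟩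
  refine (Finset.sum_bij (fun x hx => P.opList (theList x.2)) ?_ ?_ ?_ ?_).symm
  · -- maps into the slice
    intro x hx
    obtain ⟨⟨_, _, hdisj, hsup⟩, hg⟩ := hunpack x hx
    rw [Set.Finite.mem_toFinset]
    exact supp_theList P hdisj hg F hsup
  · -- injectivity
    intro x hx y hy heq
    obtain ⟨⟨_, _, hdisjx, _⟩, hgx⟩ := hunpack x hx
    obtain ⟨⟨_, _, hdisjy, _⟩, hgy⟩ := hunpack y hy
    have hperm : (theList x.2).Perm (theList y.2) :=
      decomp_unique ⟨theList_ldisj P hdisjx hgx, theList_atoms P hgx, rfl⟩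
        ⟨theList_ldisj P hdisjy hgy, theList_atoms P hgy, heq.symm⟩
    obtain ⟨π₁, g₁⟩ := x
    obtain ⟨π₂, g₂⟩ := y
    dsimp only at hgx hgy hperm ⊢
    have hπ : π₁ = π₂ := by
      ext p
      constructor
      · intro hp
        have hm : g₁ p hp ∈ theList g₂ := hperm.mem_iff.mp (mem_theList.mpr ⟨p, hp, rfl⟩)
        obtain ⟨q, hq, hval⟩ := mem_theList.mp hm
        have hqp : q = p := by
          have h2 := (hgy q hq).2
          rw [hval, (hgx p hp).2] at h2
          exact h2.symm
        exact hqp ▸ hq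
      · intro hp
        have hm : g₂ p hp ∈ theList g₁ := hperm.mem_iff.mpr (mem_theList.mpr ⟨p, hp, rfl⟩)
        obtain ⟨q, hq, hval⟩ := mem_theList.mp hm
        have hqp : q = p := by
          have h2 := (hgx q hq).2
          rw [hval, (hgy p hp).2] at h2
          exact h2.symm
        exact hqp ▸ hq
    subst hπ
    have hgeq : g₁ = g₂ := by
      funext p hp
      have hm : g₁ p hp ∈ theList g₂ := hperm.mem_iff.mp (mem_theList.mpr ⟨p, hp, rfl⟩)
      obtain ⟨q, hq, hval⟩ := mem_theList.mp hm
      have hqp : q = p := by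
        have h2 := (hgy q hq).2
        rw [hval, (hgx p hp).2] at h2
        exact h2.symm
      subst hqp
      exact hval.symm
    rw [hgeq]
  · -- surjectivity
    intro ω hω
    rw [Set.Finite.mem_toFinset] at hω
    obtain ⟨l, hld, hla, hle⟩ := exists_decomp ω
    set π : Finset (Finset ℕ+) := (l.map P.supp).toFinset with hπdef
    have hmemπ : ∀ p, p ∈ π ↔ ∃ a ∈ l, P.supp a = p := by
      intro p; rw [hπdef, List.mem_toFinset, List.mem_map]
    have hex : ∀ p ∈ π, ∃ a, a ∈ l ∧ P.supp a = p := by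
      intro p hp; obtain ⟨a, ha, h⟩ := (hmemπ p).mp hp; exact ⟨a, ha, h⟩
    set g : ∀ p ∈ π, S := fun p hp => (hex p hp).choose with hgdef
    have hspec : ∀ p (hp : p ∈ π), g p hp ∈ l ∧ P.supp (g p hp) = p :=
      fun p hp => (hex p hp).choose_spec
    have hg : ∀ p (hp : p ∈ π), P.IsAtom (g p hp) ∧ P.supp (g p hp) = p :=
      fun p hp => ⟨hla _ (hspec p hp).1, (hspec p hp).2⟩
    have hsuppω : ∀ a ∈ l, P.supp a ⊆ F := by
      intro a ha x hx
      rw [← hω, ← hle]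
      exact (mem_supp_opList hld).mpr ⟨a, ha, hx⟩
    have hdisj : ∀ p ∈ π, ∀ q ∈ π, p ≠ q → p ∩ q = ∅ := by
      intro p hp q hq hpq
      obtain ⟨a, ha, hap⟩ := (hmemπ p).mp hp
      obtain ⟨b, hb, hbq⟩ := (hmemπ q).mp hq
      have hab : a ≠ b := fun h => hpq (by rw [← hap, ← hbq, h])
      have hsym : Symmetric (fun a b : S => P.supp a ∩ P.supp b = ∅) :=
        fun x y h => disj_symm P h
      rw [← hap, ← hbq]
      exact (@List.Pairwise.forall _ _ _ ⟨fun x y h => hsym h⟩ hld) ha hb hab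
    have hsup : π.sup id = F := by
      ext x
      rw [Finset.mem_sup]
      constructor
      · rintro ⟨p, hp, hx⟩
        obtain ⟨a, ha, hap⟩ := (hmemπ p).mp hp
        exact hsuppω a ha (hap ▸ hx)
      · intro hx
        rw [← hω, ← hle] at hx
        obtain ⟨a, ha, hax⟩ := (mem_supp_opList hld).mp hx
        exact ⟨P.supp a, (hmemπ _).mpr ⟨a, ha, rfl⟩, hax⟩
    have hmemsig : (⟨π, g⟩ : Σ π : Finset (Finset ℕ+), ∀ p ∈ π, S) ∈
        (PiF F).sigma (fun π => π.pi (fun p => (hlf p).toFinset.filter P.IsAtom)) := by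
      rw [Finset.mem_sigma]
      constructor
      · rw [PiF, Finset.mem_filter, Finset.mem_powerset]
        refine ⟨fun p hp => ?_, ?_, hdisj, hsup⟩
        · obtain ⟨a, ha, hap⟩ := (hmemπ p).mp hp
          rw [Finset.mem_powerset, ← hap]
          exact hsuppω a ha
        · intro h0
          obtain ⟨a, ha, hap⟩ := (hmemπ ∅).mp h0
          exact (hla a ha).1 ((P.supp_eq_empty a).mp hap)
      · rw [Finset.mem_pi]
        intro p hp
        rw [Finset.mem_filter, Set.Finite.mem_toFinset]
        exact ⟨(hg p hp).2, (hg p hp).1⟩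
    refine ⟨⟨π, g⟩, hmemsig, ?_⟩
    -- ω = opList (theList g)
    have hnodupl : l.Nodup := nodup_of_decomp hld hla
    have hnodupt : (theList g).Nodup := theList_nodup P hg
    have hmemiff : ∀ a, a ∈ theList g ↔ a ∈ l := by
      intro a
      rw [mem_theList]
      constructor
      · rintro ⟨p, hp, hval⟩
        exact hval ▸ (hspec p hp).1
      · intro ha
        have hp : P.supp a ∈ π := (hmemπ _).mpr ⟨a, ha, rfl⟩
        refine ⟨P.supp a, hp, ?_⟩
        exact supp_inj_on_list hld hla (hspec _ hp).1 ha (hspec _ hp).2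
    have hperm : (theList g).Perm l := (List.perm_ext_iff_of_nodup hnodupt hnodupl).mpr hmemiff
    rw [← hle, ← opList_perm hperm (theList_ldisj P hdisj hg)]
  · -- values agree
    intro x hx
    obtain ⟨⟨_, _, hdisj, _⟩, hg⟩ := hunpack x hx
    exact (c_theList P hdisj hg c hmul heps).symm

lemma card_pInterval' (k : ℕ) : ((Finset.range k).image
    (fun i => (⟨i + 1, Nat.succ_pos i⟩ : ℕ+))).card = k := by
  rw [Finset.card_image_of_injective _ (fun a b h => by simpa using h), Finset.card_range]

end SFDProof

/-- equivariant partition formula. For a multiplicative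
equivariant statistics with `c ε = 1` and `n ≥ 1`, the sum over the slice
`S_{[1..n]}` is the sum over set partitions `π` of `[1..n]` of the products
over blocks `p` of the atom-slice sums over `[1..card p]`. -/
theorem slice_sum_equivariant_partition_formula {S : Type*} {R : Type*}
    [CommRing R] [Algebra ℚ R] (P : SFD S)
    (hlf : ∀ F : Finset ℕ+, {ω : S | P.supp ω = F}.Finite)
    (c : S → R)
    (hmul : ∀ ω₁ ω₂ : S, P.supp ω₁ ∩ P.supp ω₂ = ∅ →
      c (P.op ω₁ ω₂) = c ω₁ * c ω₂)
    (heqv : ∀ F₁ F₂ : Finset ℕ+, F₁.card = F₂.card →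
      (∑ᶠ ω ∈ {w : S | P.IsAtom w ∧ P.supp w = F₁}, c ω)
        = ∑ᶠ ω ∈ {w : S | P.IsAtom w ∧ P.supp w = F₂}, c ω)
    (heps : c P.eps = 1) (n : ℕ) (hn : 1 ≤ n) :
    (∑ᶠ ω ∈ {w : S | P.supp w = pInterval n}, c ω)
      = ∑ π ∈ partitionsOf n, ∏ p ∈ π,
          ∑ᶠ ω ∈ {w : S | P.IsAtom w ∧ P.supp w = pInterval p.card}, c ω := by
  classical
  have hcard : ∀ k, (pInterval k).card = k := fun k => SFDProof.card_pInterval' k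
  have hatomfin : ∀ F : Finset ℕ+, {w : S | P.IsAtom w ∧ P.supp w = F}.Finite :=
    fun F => (hlf F).subset (fun w hw => hw.2)
  have hatomsum : ∀ F : Finset ℕ+,
      (∑ᶠ ω ∈ {w : S | P.IsAtom w ∧ P.supp w = F}, c ω)
        = ∑ a ∈ (hlf F).toFinset.filter P.IsAtom, c a := by
    intro F
    rw [finsum_mem_eq_finite_toFinset_sum _ (hatomfin F)]
    apply Finset.sum_congr _ (fun _ _ => rfl)
    ext a
    simp only [Set.Finite.mem_toFinset, Set.mem_setOf_eq, Finset.mem_filter]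
    tauto
  have hPiF : partitionsOf n = SFDProof.PiF (pInterval n) := by
    ext π
    simp only [partitionsOf, SFDProof.PiF, Finset.mem_filter]
  rw [finsum_mem_eq_finite_toFinset_sum _ (hlf (pInterval n)),
    SFDProof.master P hlf c hmul heps (pInterval n), ← hPiF]
  apply Finset.sum_congr rfl
  intro π hπ
  apply Finset.prod_congr rfl
  intro p hp
  rw [← hatomsum p]
  exact (heqv (pInterval p.card) p (by rw [hcard])).symm
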